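/- Let G be a finite abelian p-group. Then the Davenport constant D(G) equals D*(G) := 1 + ∑_{i=1}^r (q_i − 1), where G ≅ C_{q_1} ⊕ ⋯ ⊕ C_{q_r} with each q_i a power of p. (Olson's theorem.) -/

import Mathlib

open Finset in
lemma aux_prod_zero {R : Type*} [CommRing R] {r : ℕ} (q : Fin r → ℕ) (y : Fin r → R)
    (hy : ∀ i, y i ^ q i = 0) {N : ℕ} (hN : ∑ i, (q i - 1) < N)
    (z : Fin N → R) (hz : ∀ j, z j ∈ Ideal.span (Set.range y)) : ∏ j, z j = 0 := by
  classical
  choose c hc using fun j => (Submodule.mem_span_range_iff_exists_fun _).mp (hz j)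
  have h0 : ∏ j, z j = ∏ j, ∑ i, c j i * y i :=
    Finset.prod_congr rfl fun j _ => by rw [← hc j]; simp [smul_eq_mul]
  rw [h0, Finset.prod_univ_sum]
  apply Finset.sum_eq_zero
  intro f _
  -- pigeonhole: some fiber of f has size ≥ q i
  obtain ⟨i, hi⟩ : ∃ i, q i ≤ (univ.filter (fun j => f j = i)).card := by
    by_contra hcon
    push_neg at hcon
    have h1 : (univ : Finset (Fin N)).card = ∑ i, (univ.filter (fun j => f j = i)).card :=
      Finset.card_eq_sum_card_fiberwise (fun x _ => mem_univ _)
    have h2 : ∑ i, (univ.filter (fun j => f j = i)).card ≤ ∑ i, (q i - 1) :=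
      Finset.sum_le_sum fun i _ => by have := hcon i; omega
    simp only [Finset.card_univ, Fintype.card_fin] at h1
    omega
  rw [Finset.prod_mul_distrib]
  have hsplit : ∏ j, y (f j) = (∏ j ∈ univ.filter (fun j => f j = i), y (f j)) *
      ∏ j ∈ univ.filter (fun j => ¬ f j = i), y (f j) :=
    (Finset.prod_filter_mul_prod_filter_not _ _ _).symm
  have hfib : ∏ j ∈ univ.filter (fun j => f j = i), y (f j) = 0 := by
    rw [Finset.prod_congr rfl (fun j hj => by rw [(Finset.mem_filter.mp hj).2]),
      Finset.prod_const]
    obtain ⟨k, hk⟩ := Nat.exists_eq_add_of_le hi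
    rw [hk, pow_add, hy i, zero_mul]
  rw [hsplit, hfib, zero_mul, mul_zero]


lemma aux_le_map {α β : Type*} [DecidableEq α] [DecidableEq β] (f : α → β) :
    ∀ (T : Multiset β) (S : Multiset α), T ≤ S.map f → ∃ T' ≤ S, T = T'.map f := by
  intro T
  induction T using Multiset.induction_on with
  | empty => exact fun S _ => ⟨0, zero_le, rfl⟩
  | cons a T ih =>
    intro S h
    have ha : a ∈ S.map f := Multiset.mem_of_le h (Multiset.mem_cons_self a T)
    obtain ⟨s, hs, rfl⟩ := Multiset.mem_map.mp ha
    have hT : T ≤ (S.erase s).map f := by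
      have h1 : T ≤ (S.map f).erase (f s) := by
        rw [← Multiset.cons_erase ha] at h
        exact (Multiset.cons_le_cons_iff _).mp h
      rwa [← Multiset.map_erase_of_mem _ _ hs] at h1
    obtain ⟨T', hT', rfl⟩ := ih (S.erase s) hT
    refine ⟨s ::ₘ T', ?_, by simp⟩
    have h2 := Multiset.cons_le_cons s hT'
    rwa [Multiset.cons_erase hs] at h2

open Finset in
lemma aux_exists_bounded {ι : Type*} [DecidableEq ι] (m : ι → ℕ) (s : Finset ι) :
    ∀ ℓ ≤ ∑ i ∈ s, m i, ∃ a : ι → ℕ, (∀ i, a i ≤ m i) ∧ ∑ i ∈ s, a i = ℓ := by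
  induction s using Finset.induction_on with
  | empty => intro ℓ hℓ; simp at hℓ; exact ⟨fun _ => 0, fun _ => Nat.zero_le _, by simp [hℓ]⟩
  | insert i s hi ih =>
    intro ℓ hℓ
    rw [Finset.sum_insert hi] at hℓ
    set t := min ℓ (m i) with ht
    obtain ⟨a, ha1, ha2⟩ := ih (ℓ - t) (by omega)
    refine ⟨Function.update a i t, fun j => ?_, ?_⟩
    · by_cases hj : j = i
      · subst hj; simp [Function.update_self]; omega
      · simp [Function.update_of_ne hj]; exact ha1 j
    · rw [Finset.sum_insert hi, Function.update_self,
        Finset.sum_congr rfl (fun j hj => Function.update_of_ne (by rintro rfl; exact hi hj) t a), ha2]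
      omega


open Finset in
lemma aux_single_sum {k G ι : Type*} [CommSemiring k] [AddCommMonoid G] (A : Finset ι)
    (x : ι → G) :
    AddMonoidAlgebra.single (∑ j ∈ A, x j) (1 : k) = ∏ j ∈ A, AddMonoidAlgebra.single (x j) 1 := by
  classical
  induction A using Finset.induction_on with
  | empty => simp [AddMonoidAlgebra.one_def]
  | insert _ _ hi ih =>
    rw [Finset.sum_insert hi, Finset.prod_insert hi, ← ih, AddMonoidAlgebra.single_mul_single,
      one_mul]

lemma aux_prod_sub_one_mem {R ι : Type*} [CommRing R] (J : Ideal R) (s : Finset ι) (f : ι → R)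
    (h : ∀ i ∈ s, f i - 1 ∈ J) : (∏ i ∈ s, f i) - 1 ∈ J := by
  classical
  induction s using Finset.induction_on with
  | empty => simp
  | insert a s hi ih =>
    rw [Finset.prod_insert hi]
    have key : f a * ∏ i ∈ s, f i - 1 = f a * ((∏ i ∈ s, f i) - 1) + (f a - 1) := by ring
    rw [key]
    exact J.add_mem (J.mul_mem_left _ (ih fun i hi' => h i (Finset.mem_insert_of_mem hi')))
      (h a (Finset.mem_insert_self a s))

lemma aux_pow_sub_one_mem {R : Type*} [CommRing R] (J : Ideal R) (z : R) (hz : z - 1 ∈ J)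
    (n : ℕ) : z ^ n - 1 ∈ J := by
  induction n with
  | zero => simp
  | succ n ih =>
    have key : z ^ (n + 1) - 1 = z * (z ^ n - 1) + (z - 1) := by ring
    rw [key]
    exact J.add_mem (J.mul_mem_left _ ih) hz

open Finset in
theorem key_mem (p : ℕ) (hp : p.Prime) (r : ℕ) (q e : Fin r → ℕ) (hq : ∀ i, q i = p ^ e i)
    (S : Multiset (∀ i, ZMod (q i))) (hS : S.card = 1 + ∑ i, (q i - 1)) :
    ∃ T, T ≤ S ∧ T ≠ 0 ∧ T.sum = 0 := by
  classical
  haveI : Fact p.Prime := ⟨hp⟩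
  by_contra hcon
  push_neg at hcon
  have hqpos : ∀ i, q i ≠ 0 := fun i => by rw [hq i]; exact pow_ne_zero _ hp.pos.ne'
  haveI : CharP (AddMonoidAlgebra (ZMod p) (∀ i, ZMod (q i))) p :=
    charP_of_injective_algebraMap' (ZMod p) p
  set X : (∀ i, ZMod (q i)) → AddMonoidAlgebra (ZMod p) (∀ i, ZMod (q i)) :=
    fun h => AddMonoidAlgebra.single h 1 with hX
  set b : Fin r → (∀ i, ZMod (q i)) := fun i => Pi.single i 1 with hb
  set y : Fin r → AddMonoidAlgebra (ZMod p) (∀ i, ZMod (q i)) := fun i => X (b i) - 1 with hy'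
  set J : Ideal (AddMonoidAlgebra (ZMod p) (∀ i, ZMod (q i))) := Ideal.span (Set.range y) with hJ
  -- nilpotency of generators
  have hsmul : ∀ i, (q i) • b i = 0 := by
    intro i
    funext j
    rw [Pi.smul_apply, Pi.zero_apply]
    by_cases hj : j = i
    · subst hj
      rw [hb]; simp only [Pi.single_eq_same]
      rw [nsmul_eq_mul, mul_one, ZMod.natCast_self]
    · rw [hb]; simp only [Pi.single_eq_of_ne hj, smul_zero]
  have hy : ∀ i, y i ^ q i = 0 := by
    intro i
    have hXpow : X (b i) ^ q i = 1 := by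
      rw [hX]
      simp only
      rw [AddMonoidAlgebra.single_pow, hsmul i, one_pow, AddMonoidAlgebra.one_def]
    rw [hy']
    simp only
    rw [hq i, sub_pow_char_pow, ← hq i, hXpow, one_pow, sub_self]
  -- every X h - 1 is in the augmentation ideal
  have hmem : ∀ h : (∀ i, ZMod (q i)), X h - 1 ∈ J := by
    intro h
    have hrep : h = ∑ i, ((h i).val • b i) := by
      funext j
      rw [Finset.sum_apply]
      rw [Finset.sum_eq_single j]
      · haveI : NeZero (q j) := ⟨hqpos j⟩
        rw [Pi.smul_apply, hb]; simp only [Pi.single_eq_same]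
        rw [nsmul_eq_mul, mul_one, ZMod.natCast_rightInverse (h j)]
      · intro i _ hij
        rw [Pi.smul_apply, hb]; simp only [Pi.single_eq_of_ne (Ne.symm hij), smul_zero]
      · intro hj; exact absurd (Finset.mem_univ j) hj
    rw [hX]; simp only
    rw [hrep, aux_single_sum]
    apply aux_prod_sub_one_mem
    intro i _
    have h1 : AddMonoidAlgebra.single ((h i).val • b i) (1 : ZMod p) = X (b i) ^ (h i).val := by
      rw [hX]; simp only
      rw [AddMonoidAlgebra.single_pow, one_pow]
    rw [h1]
    exact aux_pow_sub_one_mem J _ (Ideal.subset_span ⟨i, rfl⟩) _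
  -- set up the sequence
  set L := S.toList with hL
  have hLlen : ∑ i, (q i - 1) < L.length := by
    rw [hL, Multiset.length_toList, hS]; omega
  set x : Fin L.length → (∀ i, ZMod (q i)) := L.get with hx
  have hzero : ∏ j, (X (x j) - 1) = 0 :=
    aux_prod_zero q y hy hLlen _ (fun j => hmem _)
  -- no nonempty subset sums to zero
  have hAsum : ∀ A : Finset (Fin L.length), A ≠ ∅ → ∑ j ∈ A, x j ≠ 0 := by
    intro A hA h0
    have hmapS : Multiset.map x Finset.univ.val = S := by
      have h1 : (Finset.univ.val : Multiset (Fin L.length)) = ↑(List.finRange L.length) := rfl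
      rw [h1, Multiset.map_coe, hx, List.map_get_finRange, hL, Multiset.coe_toList]
    refine hcon (A.val.map x) ?_ ?_ ?_
    · rw [← hmapS]
      exact Multiset.map_le_map (Finset.val_le_iff.mpr (Finset.subset_univ A))
    · intro hT
      apply hA
      rwa [Multiset.map_eq_zero, Finset.val_eq_zero] at hT
    · exact h0
  -- expansion of the product
  have hexp : ∏ j : Fin L.length, (X (x j) - 1) =
      ∑ A ∈ (univ : Finset (Fin L.length)).powerset,
        AddMonoidAlgebra.single (∑ j ∈ A, x j) ((-1 : ZMod p) ^ (univ \ A).card) := by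
    have hstep : ∀ j : Fin L.length, X (x j) - 1 = X (x j) + (-1) := fun j => by ring
    rw [Finset.prod_congr rfl (fun j _ => hstep j), Finset.prod_add]
    refine Finset.sum_congr rfl fun A _ => ?_
    rw [Finset.prod_const]
    have hneg : (-1 : AddMonoidAlgebra (ZMod p) (∀ i, ZMod (q i))) =
        AddMonoidAlgebra.single (0 : ∀ i, ZMod (q i)) (-1 : ZMod p) := by
      rw [show AddMonoidAlgebra.single (0 : ∀ i, ZMod (q i)) (-1 : ZMod p) =
        -AddMonoidAlgebra.single (0 : ∀ i, ZMod (q i)) (1 : ZMod p) from AddMonoidAlgebra.single_neg _ _,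
        ← AddMonoidAlgebra.one_def]
    rw [hneg, AddMonoidAlgebra.single_pow, smul_zero]
    rw [hX]; simp only
    rw [← aux_single_sum, AddMonoidAlgebra.single_mul_single, add_zero, one_mul]
  -- evaluate the coefficient at 0
  have h1 : (∑ A ∈ (univ : Finset (Fin L.length)).powerset,
      AddMonoidAlgebra.single (∑ j ∈ A, x j) ((-1 : ZMod p) ^ (univ \ A).card)
      : AddMonoidAlgebra (ZMod p) (∀ i, ZMod (q i))) = 0 := by
    exact hexp ▸ hzero
  have h2 := congrArg (fun F : AddMonoidAlgebra (ZMod p) (∀ i, ZMod (q i)) => F.coeff 0) h1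
  simp only [AddMonoidAlgebra.coeff_sum, AddMonoidAlgebra.coeff_single, AddMonoidAlgebra.coeff_zero, Finsupp.finset_sum_apply, Finsupp.coe_zero, Pi.zero_apply] at h2
  rw [Finset.sum_eq_single_of_mem ∅ (Finset.empty_mem_powerset _)
    (fun A _ hAne => by rw [Finsupp.single_apply, if_neg (hAsum A hAne)])] at h2
  rw [Finset.sum_empty, Finsupp.single_eq_same] at h2
  exact pow_ne_zero _ (neg_ne_zero.mpr one_ne_zero) h2

lemma aux_multiset_sum_apply {ι : Type*} {π : ι → Type*} [∀ i, AddCommMonoid (π i)]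
    (M : Multiset (∀ i, π i)) (j : ι) : M.sum j = (M.map (fun f => f j)).sum := by
  induction M using Multiset.induction_on with
  | empty => simp
  | cons a M ih => simp [ih]

lemma aux_card_sum {α ι : Type*} (s : Finset ι) (f : ι → Multiset α) :
    Multiset.card (∑ i ∈ s, f i) = ∑ i ∈ s, Multiset.card (f i) :=
  map_sum (⟨⟨Multiset.card, Multiset.card_zero⟩, Multiset.card_add⟩ : Multiset α →+ ℕ) f s

open Finset in
theorem key_lb (p : ℕ) (hp : p.Prime) (r : ℕ) (q e : Fin r → ℕ) (hq : ∀ i, q i = p ^ e i)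
    (ℓ : ℕ)
    (hℓ : ∀ S : Multiset (∀ i, ZMod (q i)), S.card = ℓ → ∃ T, T ≤ S ∧ T ≠ 0 ∧ T.sum = 0) :
    1 + ∑ i, (q i - 1) ≤ ℓ := by
  classical
  by_contra hcon
  push_neg at hcon
  have hℓle : ℓ ≤ ∑ i, (q i - 1) := by omega
  obtain ⟨a, ha1, ha2⟩ := aux_exists_bounded (fun i => q i - 1) univ ℓ hℓle
  have hqpos : ∀ i, q i ≠ 0 := fun i => by rw [hq i]; exact pow_ne_zero _ hp.pos.ne'
  set b : Fin r → (∀ i, ZMod (q i)) := fun i => Pi.single i 1 with hb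
  set I : Multiset (Fin r) := ∑ i ∈ univ, a i • ({i} : Multiset (Fin r)) with hI
  have hcount : ∀ j, I.count j = a j := by
    intro j
    rw [hI, show Multiset.count j (∑ i ∈ univ, a i • ({i} : Multiset (Fin r)))
      = ∑ i ∈ univ, Multiset.count j (a i • ({i} : Multiset (Fin r))) from
      map_sum (Multiset.countAddMonoidHom j) _ _]
    simp [Multiset.count_nsmul, Multiset.count_singleton]
  obtain ⟨T, hTS, hT0, hTsum⟩ := hℓ (I.map b) (by
    rw [Multiset.card_map, hI, aux_card_sum]
    simpa using ha2)
  obtain ⟨T', hT', rfl⟩ := aux_le_map b T I hTS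
  have hcnt0 : ∀ j, T'.count j = 0 := by
    intro j
    have h1 : ((T'.count j : ℕ) : ZMod (q j)) = 0 := by
      have h2 := congrFun hTsum j
      rw [aux_multiset_sum_apply, Multiset.map_map, Pi.zero_apply] at h2
      rw [← Multiset.filter_add_not (· = j) T', Multiset.map_add, Multiset.sum_add,
        show ((fun f : (∀ i, ZMod (q i)) => f j) ∘ b) = fun i => b i j from rfl] at h2
      have h3 : Multiset.map (fun i => b i j) (T'.filter (· = j)) =
          Multiset.replicate (T'.count j) 1 := by
        rw [Multiset.filter_eq', Multiset.map_replicate]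
        rw [hb]; simp only [Function.comp]
        rw [Pi.single_eq_same]
      have h4 : (Multiset.map (fun i => b i j) (T'.filter (fun i => ¬ i = j))).sum = 0 := by
        apply Multiset.sum_eq_zero
        intro z hz
        obtain ⟨i, hi, rfl⟩ := Multiset.mem_map.mp hz
        have : i ≠ j := (Multiset.mem_filter.mp hi).2
        rw [hb]; simp only [Function.comp]
        exact Pi.single_eq_of_ne (Ne.symm this) 1
      rw [h3, h4, add_zero, Multiset.sum_replicate, nsmul_eq_mul, mul_one] at h2
      exact h2
    rw [ZMod.natCast_eq_zero_iff] at h1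
    have h5 : T'.count j ≤ a j := hcount j ▸ Multiset.count_le_of_le j hT'
    have h6 := ha1 j
    have := hqpos j
    exact Nat.eq_zero_of_dvd_of_lt h1 (by omega)
  apply hT0
  rw [Multiset.map_eq_zero]
  apply Multiset.eq_zero_of_forall_notMem
  intro j hj
  exact absurd (hcnt0 j) (Multiset.count_pos.mpr hj).ne'


lemma aux_transfer {G H : Type*} [AddCommGroup G] [AddCommGroup H] (φ : G ≃+ H) (ℓ : ℕ)
    (h : ∀ S : Multiset G, Multiset.card S = ℓ → ∃ T, T ≤ S ∧ T ≠ 0 ∧ T.sum = 0) :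
    ∀ S : Multiset H, Multiset.card S = ℓ → ∃ T, T ≤ S ∧ T ≠ 0 ∧ T.sum = 0 := by
  intro S hS
  obtain ⟨T, hT1, hT2, hT3⟩ := h (S.map φ.symm) (by rw [Multiset.card_map, hS])
  refine ⟨T.map φ, ?_, ?_, ?_⟩
  · have h5 := Multiset.map_le_map (f := φ) hT1
    rwa [Multiset.map_map, show (⇑φ ∘ ⇑φ.symm) = id from funext φ.apply_symm_apply,
      Multiset.map_id] at h5
  · simpa [Multiset.map_eq_zero] using hT2
  · have h4 : ∀ U : Multiset G, (U.map φ).sum = φ U.sum := by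
      intro U
      induction U using Multiset.induction_on with
      | empty => simp
      | cons a U ih => simp [ih]
    rw [h4, hT3, map_zero]

theorem stmt11 (p : ℕ) (hp : p.Prime) (G : Type*) [AddCommGroup G] [Fintype G]
    (r : ℕ) (q e : Fin r → ℕ) (hq : ∀ i, q i = p ^ e i)
    (iso : G ≃+ ∀ i, ZMod (q i)) :
    IsLeast {ℓ : ℕ | ∀ S : Multiset G, S.card = ℓ →
        ∃ T, T ≤ S ∧ T ≠ 0 ∧ T.sum = 0}
      (1 + ∑ i, (q i - 1)) := by
  constructor
  · intro S hS
    exact aux_transfer iso.symm _ (key_mem p hp r q e hq) S hS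
  · intro ℓ hℓ
    exact key_lb p hp r q e hq ℓ (aux_transfer iso ℓ hℓ)
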